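/- Let L be a pm-algebra with 0 ≠ 1 whose prime filter space is φ-connected. If Body(L) has fewer than two elements, or Body(L) = {P, φ(P)} for some prime filter P with φ(P) ≠ P, then L is subdirectly irreducible. -/
import Mathlib


/-- A pseudocomplemented De Morgan algebra (pm-algebra): a bounded distributive
lattice with a De Morgan involution `dm` and a pseudocomplement `pc`. -/
class PMAlgebra (L : Type*) extends DistribLattice L, BoundedOrder L where
  dm : L → L
  pc : L → L
  dm_dm : ∀ a : L, dm (dm a) = a
  dm_inf : ∀ a b : L, dm (a ⊓ b) = dm a ⊔ dm b
  pc_iff : ∀ a b : L, a ⊓ b = ⊥ ↔ b ≤ pc a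

namespace PMAlgebra

variable {L : Type*} [PMAlgebra L]

/-- A congruence of a pm-algebra. -/
def IsCongruence (θ : L → L → Prop) : Prop :=
  Equivalence θ ∧
  (∀ a b c d : L, θ a b → θ c d → θ (a ⊓ c) (b ⊓ d)) ∧
  (∀ a b c d : L, θ a b → θ c d → θ (a ⊔ c) (b ⊔ d)) ∧
  (∀ a b : L, θ a b → θ (dm a) (dm b)) ∧
  (∀ a b : L, θ a b → θ (pc a) (pc b))

/-- `L` is simple: it has more than one element and its only congruences are
equality and the total relation. -/
def Simple (L : Type*) [PMAlgebra L] : Prop :=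
  Nontrivial L ∧ ∀ θ : L → L → Prop, IsCongruence θ →
    θ = (fun a b => a = b) ∨ θ = (fun _ _ => True)

/-- `L` is subdirectly irreducible: there is a congruence `μ ≠ Eq` contained in
every congruence different from equality. -/
def SubdirectlyIrreducible (L : Type*) [PMAlgebra L] : Prop :=
  ∃ μ : L → L → Prop, IsCongruence μ ∧ μ ≠ (fun a b => a = b) ∧
    ∀ θ : L → L → Prop, IsCongruence θ → θ ≠ (fun a b => a = b) →
      ∀ a b : L, μ a b → θ a b

/-- A prime filter of the underlying lattice of `L`. -/
def IsPrimeFilter (P : Set L) : Prop :=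
  P.Nonempty ∧ P ≠ Set.univ ∧
  (∀ a b : L, a ∈ P → a ≤ b → b ∈ P) ∧
  (∀ a b : L, a ∈ P → b ∈ P → a ⊓ b ∈ P) ∧
  (∀ a b : L, a ⊔ b ∈ P → a ∈ P ∨ b ∈ P)

/-- The Birula–Rasiowa transformation. -/
def phi (P : Set L) : Set L := {a : L | dm a ∉ P}

/-- `P` is a maximal prime filter. -/
def IsMaximalPF (P : Set L) : Prop :=
  IsPrimeFilter P ∧ ∀ Q : Set L, IsPrimeFilter Q → P ⊆ Q → Q = P

/-- `P` is a minimal prime filter. -/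
def IsMinimalPF (P : Set L) : Prop :=
  IsPrimeFilter P ∧ ∀ Q : Set L, IsPrimeFilter Q → Q ⊆ P → Q = P

/-- The body of `L`: prime filters that are neither maximal nor minimal. -/
def body (L : Type*) [PMAlgebra L] : Set (Set L) :=
  {P : Set L | IsPrimeFilter P ∧ ¬ IsMaximalPF P ∧ ¬ IsMinimalPF P}

/-- The prime filter space of `L` is φ-connected. -/
def PhiConnected (L : Type*) [PMAlgebra L] : Prop :=
  ∀ S : Set (Set L), S ⊆ {P : Set L | IsPrimeFilter P} → S.Nonempty →
    (∀ P Q : Set L, P ∈ S → IsPrimeFilter Q → P ⊆ Q → Q ∈ S) →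
    (∀ P Q : Set L, P ∈ S → IsPrimeFilter Q → Q ⊆ P → Q ∈ S) →
    (∀ P : Set L, P ∈ S → phi P ∈ S) →
    S = {P : Set L | IsPrimeFilter P}

/-- The Kleene identity. -/
def Kleene (L : Type*) [PMAlgebra L] : Prop :=
  ∀ a b : L, a ⊓ dm a ≤ b ⊔ dm b

/-- The term `C(x) = (x ∧ x') ∨ (x ∧ x')*`. -/
def C (x : L) : L := (x ⊓ dm x) ⊔ pc (x ⊓ dm x)

/-- The term `T(x) = C(x) ∧ C(x)'`. -/
def T (x : L) : L := C x ⊓ dm (C x)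

end PMAlgebra


namespace PMAlgebra
variable {L : Type*} [PMAlgebra L]
-- basic pc lemmas

lemma inf_pc (a : L) : a ⊓ pc a = ⊥ := (pc_iff a (pc a)).mpr le_rfl

lemma pc_bot : pc (⊥ : L) = ⊤ :=
  le_antisymm le_top ((pc_iff ⊥ ⊤).mp (by simp))

lemma pc_antitone {a b : L} (h : a ≤ b) : pc b ≤ pc a :=
  (pc_iff a (pc b)).mp (le_bot_iff.mp (le_trans (inf_le_inf_right _ h) (le_of_eq (inf_pc b))))

lemma pc_sup (a b : L) : pc (a ⊔ b) = pc a ⊓ pc b := by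
  apply le_antisymm
  · exact le_inf (pc_antitone le_sup_left) (pc_antitone le_sup_right)
  · refine (pc_iff _ _).mp ?_
    have : (a ⊔ b) ⊓ (pc a ⊓ pc b) = (a ⊓ (pc a ⊓ pc b)) ⊔ (b ⊓ (pc a ⊓ pc b)) := by
      rw [inf_comm, inf_sup_left, inf_comm (pc a ⊓ pc b) a, inf_comm (pc a ⊓ pc b) b]
    rw [this]
    have h1 : a ⊓ (pc a ⊓ pc b) = ⊥ := le_bot_iff.mp (le_trans (inf_le_inf_left a inf_le_left) (le_of_eq (inf_pc a)))
    have h2 : b ⊓ (pc a ⊓ pc b) = ⊥ := le_bot_iff.mp (le_trans (inf_le_inf_left b inf_le_right) (le_of_eq (inf_pc b)))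
    rw [h1, h2, sup_idem]

lemma pc_eq_bot_of_dense {a : L} : pc a = ⊥ ↔ pc a = ⊥ := Iff.rfl

-- dm lemmas
lemma dm_antitone {a b : L} (h : a ≤ b) : dm b ≤ dm a := by
  have : dm (a ⊓ b) = dm a ⊔ dm b := dm_inf a b
  rw [inf_eq_left.mpr h] at this
  rw [this]
  exact le_sup_right

lemma dm_bot : dm (⊥ : L) = ⊤ := by
  apply le_antisymm le_top
  calc (⊤:L) = dm (dm ⊤) := (dm_dm ⊤).symm
  _ ≤ dm ⊥ := dm_antitone bot_le

lemma dm_top : dm (⊤ : L) = ⊥ := by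
  apply le_antisymm _ bot_le
  calc dm (⊤:L) ≤ dm (dm ⊥) := dm_antitone le_top
  _ = ⊥ := dm_dm ⊥

lemma dm_sup (a b : L) : dm (a ⊔ b) = dm a ⊓ dm b := by
  have := dm_inf (dm a) (dm b)
  rw [dm_dm, dm_dm] at this
  calc dm (a ⊔ b) = dm (dm (dm a ⊓ dm b)) := by rw [this]
  _ = dm a ⊓ dm b := dm_dm _


-- prime filter basics
lemma pf_top {P : Set L} (hP : IsPrimeFilter P) : ⊤ ∈ P := by
  obtain ⟨x, hx⟩ := hP.1
  exact hP.2.2.1 x ⊤ hx le_top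

lemma pf_bot {P : Set L} (hP : IsPrimeFilter P) : ⊥ ∉ P := by
  intro h
  exact hP.2.1 (Set.eq_univ_of_forall fun x => hP.2.2.1 ⊥ x h bot_le)

lemma pf_inf_iff {P : Set L} (hP : IsPrimeFilter P) {a b : L} :
    a ⊓ b ∈ P ↔ a ∈ P ∧ b ∈ P :=
  ⟨fun h => ⟨hP.2.2.1 _ _ h inf_le_left, hP.2.2.1 _ _ h inf_le_right⟩,
   fun h => hP.2.2.2.1 _ _ h.1 h.2⟩

-- phi basics
lemma phi_phi (P : Set L) : phi (phi P) = P := by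
  ext a
  simp only [phi, Set.mem_setOf_eq, dm_dm, not_not]

lemma isPrimeFilter_phi {P : Set L} (hP : IsPrimeFilter P) : IsPrimeFilter (phi P) := by
  classical
  refine ⟨⟨⊤, ?_⟩, ?_, ?_, ?_, ?_⟩
  · show dm ⊤ ∉ P
    rw [dm_top]; exact pf_bot hP
  · intro h
    have hb : (⊥ : L) ∈ phi P := h ▸ Set.mem_univ ⊥
    exact hb (by rw [dm_bot] at *; exact pf_top hP)
  · intro a b ha hab hb
    exact ha (hP.2.2.1 (dm b) (dm a) hb (dm_antitone hab))
  · intro a b ha hb hab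
    rw [show dm (a ⊓ b) = dm a ⊔ dm b from dm_inf a b] at hab
    rcases hP.2.2.2.2 _ _ hab with h | h
    exacts [ha h, hb h]
  · intro a b hab
    by_contra h
    push_neg at h
    obtain ⟨ha, hb⟩ := h
    simp only [phi, Set.mem_setOf_eq, not_not] at ha hb
    exact hab (show dm (a ⊔ b) ∈ P by rw [dm_sup]; exact hP.2.2.2.1 _ _ ha hb)

lemma phi_anti {P Q : Set L} (h : P ⊆ Q) : phi Q ⊆ phi P :=
  fun _ ha hb => ha (h hb)

lemma maximal_phi_of_minimal {P : Set L} (h : IsMinimalPF P) : IsMaximalPF (phi P) := by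
  refine ⟨isPrimeFilter_phi h.1, fun Q hQ hPQ => ?_⟩
  have h1 : phi Q ⊆ phi (phi P) := phi_anti hPQ
  rw [phi_phi] at h1
  have h2 : phi Q = P := h.2 (phi Q) (isPrimeFilter_phi hQ) h1
  calc Q = phi (phi Q) := (phi_phi Q).symm
  _ = phi P := by rw [h2]

lemma minimal_phi_of_maximal {P : Set L} (h : IsMaximalPF P) : IsMinimalPF (phi P) := by
  refine ⟨isPrimeFilter_phi h.1, fun Q hQ hQP => ?_⟩
  have h1 : phi (phi P) ⊆ phi Q := phi_anti hQP
  rw [phi_phi] at h1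
  have h2 : phi Q = P := h.2 (phi Q) (isPrimeFilter_phi hQ) h1
  calc Q = phi (phi Q) := (phi_phi Q).symm
  _ = phi P := by rw [h2]

-- saturation
def Sat (θ : L → L → Prop) (S : Set L) : Prop := ∀ x y : L, θ x y → (x ∈ S ↔ y ∈ S)

lemma sat_eq (S : Set L) : Sat (fun a b => a = b) S := fun x y h => by rw [h]

/-- The master separation lemma: a saturated filter disjoint from a saturated
ideal extends to a saturated prime filter disjoint from the ideal. -/
lemma sep_sat {θ : L → L → Prop}
    (href : ∀ a : L, θ a a) (hsym : ∀ a b : L, θ a b → θ b a)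
    (htr : ∀ a b c : L, θ a b → θ b c → θ a c)
    (hinf : ∀ a b c d : L, θ a b → θ c d → θ (a ⊓ c) (b ⊓ d))
    (hsup : ∀ a b c d : L, θ a b → θ c d → θ (a ⊔ c) (b ⊔ d))
    {F I : Set L} (hFne : F.Nonempty)
    (hFup : ∀ x y : L, x ∈ F → x ≤ y → y ∈ F)
    (hFinf : ∀ x y : L, x ∈ F → y ∈ F → x ⊓ y ∈ F)
    (hFsat : Sat θ F)
    (hIne : I.Nonempty)
    (hIdown : ∀ x y : L, x ≤ y → y ∈ I → x ∈ I)
    (hIsup : ∀ x y : L, x ∈ I → y ∈ I → x ⊔ y ∈ I)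
    (hIsat : Sat θ I)
    (hdisj : ∀ x, x ∈ F → x ∉ I) :
    ∃ P : Set L, IsPrimeFilter P ∧ Sat θ P ∧ F ⊆ P ∧ ∀ x ∈ P, x ∉ I := by
  classical
  set 𝒮 : Set (Set L) := {G | (∀ x y : L, x ∈ G → x ≤ y → y ∈ G) ∧
    (∀ x y : L, x ∈ G → y ∈ G → x ⊓ y ∈ G) ∧ Sat θ G ∧ F ⊆ G ∧ ∀ x ∈ G, x ∉ I} with h𝒮
  have hF𝒮 : F ∈ 𝒮 := ⟨hFup, hFinf, hFsat, fun _ h => h, hdisj⟩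
  have hzorn : ∀ c ⊆ 𝒮, IsChain (· ⊆ ·) c → c.Nonempty → ∃ ub ∈ 𝒮, ∀ s ∈ c, s ⊆ ub := by
    intro c hc hchain hcne
    obtain ⟨G0, hG0⟩ := hcne
    refine ⟨⋃₀ c, ⟨?_, ?_, ?_, ?_, ?_⟩, fun s hs => Set.subset_sUnion_of_mem hs⟩
    · rintro x y ⟨G, hG, hx⟩ hxy
      exact ⟨G, hG, (hc hG).1 x y hx hxy⟩
    · rintro x y ⟨G1, hG1, hx⟩ ⟨G2, hG2, hy⟩
      rcases hchain.total hG1 hG2 with h | h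
      · exact ⟨G2, hG2, (hc hG2).2.1 x y (h hx) hy⟩
      · exact ⟨G1, hG1, (hc hG1).2.1 x y hx (h hy)⟩
    · rintro x y hxy
      constructor
      · rintro ⟨G, hG, hx⟩
        exact ⟨G, hG, ((hc hG).2.2.1 x y hxy).mp hx⟩
      · rintro ⟨G, hG, hy⟩
        exact ⟨G, hG, ((hc hG).2.2.1 x y hxy).mpr hy⟩
    · exact fun x hx => ⟨G0, hG0, (hc hG0).2.2.2.1 hx⟩
    · rintro x ⟨G, hG, hx⟩
      exact (hc hG).2.2.2.2 x hx
  obtain ⟨M, hFM, hMmem, hMmax⟩ : ∃ M, F ⊆ M ∧ M ∈ 𝒮 ∧ ∀ G ∈ 𝒮, M ⊆ G → G = M := by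
    obtain ⟨M, hFM, hM⟩ := zorn_subset_nonempty 𝒮 hzorn F hF𝒮
    exact ⟨M, hFM, hM.1, fun G hG hMG => subset_antisymm (hM.2 hG hMG) hMG⟩
  obtain ⟨hMup, hMinf, hMsat, hFM', hMdisj⟩ := hMmem
  obtain ⟨i, hi⟩ := hIne
  refine ⟨M, ⟨?_, ?_, hMup, hMinf, ?_⟩, hMsat, hFM, hMdisj⟩
  · obtain ⟨f, hf⟩ := hFne; exact ⟨f, hFM hf⟩
  · intro h
    exact hMdisj i (h ▸ Set.mem_univ i) hi
  · intro a b hab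
    by_contra hcon
    push_neg at hcon
    obtain ⟨haM, hbM⟩ := hcon
    have key : ∀ c : L, c ∉ M → ∃ p ∈ M, p ⊓ c ∈ I := by
      intro c hcM
      set G : Set L := {y | ∃ x : L, (∃ p ∈ M, p ⊓ c ≤ x) ∧ θ x y} with hG
      have hMG : M ⊆ G := fun p hp => ⟨p, ⟨p, hp, inf_le_left⟩, href p⟩
      have hcG : c ∈ G := by
        obtain ⟨f, hf⟩ := hFne
        exact ⟨c, ⟨f, hFM hf, inf_le_right⟩, href c⟩
      have hGup : ∀ x y : L, x ∈ G → x ≤ y → y ∈ G := by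
        rintro x y ⟨x', ⟨p, hp, hpx⟩, hθ⟩ hxy
        refine ⟨x' ⊔ y, ⟨p, hp, le_trans hpx le_sup_left⟩, ?_⟩
        have h2 := hsup x' x y y hθ (href y)
        rwa [sup_eq_right.mpr hxy] at h2
      have hGinf : ∀ x y : L, x ∈ G → y ∈ G → x ⊓ y ∈ G := by
        rintro x y ⟨x', ⟨p, hp, hpx⟩, hθx⟩ ⟨y', ⟨q, hq, hqy⟩, hθy⟩
        refine ⟨x' ⊓ y', ⟨p ⊓ q, hMinf p q hp hq, ?_⟩, hinf _ _ _ _ hθx hθy⟩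
        calc p ⊓ q ⊓ c ≤ (p ⊓ c) ⊓ (q ⊓ c) := by
              refine le_inf (inf_le_inf_right c ?_) (inf_le_inf_right c ?_)
              exacts [inf_le_left, inf_le_right]
        _ ≤ x' ⊓ y' := inf_le_inf hpx hqy
      have hGsat : Sat θ G := by
        rintro x y hxy
        constructor
        · rintro ⟨x', hx', hθ⟩
          exact ⟨x', hx', htr _ _ _ hθ hxy⟩
        · rintro ⟨y', hy', hθ⟩
          exact ⟨y', hy', htr _ _ _ hθ (hsym _ _ hxy)⟩
      have hGF : F ⊆ G := fun f hf => hMG (hFM hf)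
      have hGne : G ≠ M := fun h => hcM (h ▸ hcG)
      have hGnot : G ∉ 𝒮 := fun h => hGne (hMmax G h hMG)
      rw [h𝒮] at hGnot
      simp only [Set.mem_setOf_eq] at hGnot
      push_neg at hGnot
      obtain ⟨y, hyG, hyI⟩ := hGnot hGup hGinf hGsat hGF
      obtain ⟨x, ⟨p, hp, hpx⟩, hθ⟩ := hyG
      have hxI : x ∈ I := (hIsat x y hθ).mpr hyI
      exact ⟨p, hp, hIdown (p ⊓ c) x hpx hxI⟩
    obtain ⟨p, hp, hpa⟩ := key a haM
    obtain ⟨q, hq, hqb⟩ := key b hbM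
    have hr : p ⊓ q ⊓ (a ⊔ b) ∈ M := hMinf _ _ (hMinf p q hp hq) hab
    have hrI : p ⊓ q ⊓ (a ⊔ b) ∈ I := by
      refine hIdown _ _ ?_ (hIsup _ _ hpa hqb)
      calc p ⊓ q ⊓ (a ⊔ b) = (p ⊓ q ⊓ a) ⊔ (p ⊓ q ⊓ b) := inf_sup_left _ _ _
      _ ≤ (p ⊓ a) ⊔ (q ⊓ b) :=
          sup_le_sup (inf_le_inf_right a inf_le_left) (inf_le_inf_right b inf_le_right)
    exact hMdisj _ hr hrI

lemma pf_sup_iff {P : Set L} (hP : IsPrimeFilter P) {a b : L} :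
    a ⊔ b ∈ P ↔ a ∈ P ∨ b ∈ P :=
  ⟨hP.2.2.2.2 a b, fun h => h.elim (fun h => hP.2.2.1 _ _ h le_sup_left)
    (fun h => hP.2.2.1 _ _ h le_sup_right)⟩

lemma exists_pf_between {u v : L} (h : ¬ v ≤ u) :
    ∃ P : Set L, IsPrimeFilter P ∧ v ∈ P ∧ u ∉ P := by
  obtain ⟨P, hP, _, hF, hI⟩ := sep_sat (θ := fun a b : L => a = b)
    (fun a => rfl) (fun a b h => h.symm) (fun a b c h1 h2 => h1.trans h2)
    (fun a b c d h1 h2 => by rw [h1, h2]) (fun a b c d h1 h2 => by rw [h1, h2])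
    (F := {x : L | v ≤ x}) (I := {x : L | x ≤ u})
    ⟨v, le_rfl⟩ (fun x y hx hxy => le_trans hx hxy)
    (fun x y hx hy => le_inf hx hy) (sat_eq _)
    ⟨u, le_rfl⟩ (fun x y hxy hy => le_trans hxy hy)
    (fun x y hx hy => sup_le hx hy) (sat_eq _)
    (fun x hx hxI => h (le_trans hx hxI))
  exact ⟨P, hP, hF le_rfl, fun hu => hI u hu le_rfl⟩

lemma exists_pf_extend {Q : Set L} {a : L} (hQ : IsPrimeFilter Q) (hpc : pc a ∉ Q) :
    ∃ P : Set L, IsPrimeFilter P ∧ Q ⊆ P ∧ a ∈ P := by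
  obtain ⟨q0, hq0⟩ := hQ.1
  obtain ⟨P, hP, _, hF, hI⟩ := sep_sat (θ := fun a b : L => a = b)
    (fun a => rfl) (fun a b h => h.symm) (fun a b c h1 h2 => h1.trans h2)
    (fun a b c d h1 h2 => by rw [h1, h2]) (fun a b c d h1 h2 => by rw [h1, h2])
    (F := {x : L | ∃ p ∈ Q, p ⊓ a ≤ x}) (I := {x : L | x ≤ ⊥})
    ⟨a, q0, hq0, inf_le_right⟩
    (fun x y hx hxy => by obtain ⟨p, hp, hpx⟩ := hx; exact ⟨p, hp, le_trans hpx hxy⟩)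
    (fun x y hx hy => by
      obtain ⟨p, hp, hpx⟩ := hx; obtain ⟨q, hq, hqy⟩ := hy
      refine ⟨p ⊓ q, hQ.2.2.2.1 p q hp hq, ?_⟩
      calc p ⊓ q ⊓ a ≤ (p ⊓ a) ⊓ (q ⊓ a) := by
            refine le_inf (inf_le_inf_right a ?_) (inf_le_inf_right a ?_)
            exacts [inf_le_left, inf_le_right]
      _ ≤ x ⊓ y := inf_le_inf hpx hqy)
    (sat_eq _) ⟨⊥, le_rfl⟩ (fun x y hxy hy => le_trans hxy hy)
    (fun x y hx hy => sup_le hx hy) (sat_eq _)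
    (fun x hx hxI => by
      obtain ⟨p, hp, hpx⟩ := hx
      have hpa : a ⊓ p = ⊥ := by
        rw [inf_comm]
        exact le_bot_iff.mp (le_trans hpx hxI)
      exact hpc (hQ.2.2.1 p (pc a) hp ((pc_iff a p).mp hpa)))
  refine ⟨P, hP, fun p hp => hF ⟨p, hp, inf_le_left⟩, hF ⟨q0, hq0, inf_le_right⟩⟩

lemma exists_maximal_above {P : Set L} (hP : IsPrimeFilter P) :
    ∃ M : Set L, IsMaximalPF M ∧ P ⊆ M := by
  classical
  set 𝒮 : Set (Set L) := {Q | IsPrimeFilter Q ∧ P ⊆ Q} with h𝒮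
  have hzorn : ∀ c ⊆ 𝒮, IsChain (· ⊆ ·) c → c.Nonempty → ∃ ub ∈ 𝒮, ∀ s ∈ c, s ⊆ ub := by
    intro c hc hchain hcne
    obtain ⟨G0, hG0⟩ := hcne
    refine ⟨⋃₀ c, ⟨⟨⟨⊤, ⟨G0, hG0, pf_top (hc hG0).1⟩⟩, ?_, ?_, ?_, ?_⟩, fun x hx => ⟨G0, hG0, (hc hG0).2 hx⟩⟩, fun s hs => Set.subset_sUnion_of_mem hs⟩
    · intro h
      have hb : (⊥ : L) ∈ ⋃₀ c := h ▸ Set.mem_univ ⊥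
      obtain ⟨G, hG, hbm⟩ := hb
      exact pf_bot (hc hG).1 hbm
    · rintro x y ⟨G, hG, hx⟩ hxy
      exact ⟨G, hG, (hc hG).1.2.2.1 x y hx hxy⟩
    · rintro x y ⟨G1, hG1, hx⟩ ⟨G2, hG2, hy⟩
      rcases hchain.total hG1 hG2 with h | h
      · exact ⟨G2, hG2, (hc hG2).1.2.2.2.1 x y (h hx) hy⟩
      · exact ⟨G1, hG1, (hc hG1).1.2.2.2.1 x y hx (h hy)⟩
    · rintro x y ⟨G, hG, hxy⟩
      rcases (hc hG).1.2.2.2.2 x y hxy with h | h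
      · exact Or.inl ⟨G, hG, h⟩
      · exact Or.inr ⟨G, hG, h⟩
  obtain ⟨M, hPM, hM⟩ := zorn_subset_nonempty 𝒮 hzorn P (show P ∈ 𝒮 from ⟨hP, le_rfl⟩)
  have hMS : IsPrimeFilter M ∧ P ⊆ M := hM.1
  exact ⟨M, And.intro (And.intro hMS.1 (fun R hR hMR =>
    subset_antisymm (hM.2 (show R ∈ 𝒮 from ⟨hR, le_trans hPM hMR⟩) hMR) hMR)) hPM⟩

lemma exists_minimal_below {P : Set L} (hP : IsPrimeFilter P) :
    ∃ m : Set L, IsMinimalPF m ∧ m ⊆ P := by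
  classical
  set 𝒮 : Set (Set L) := {Q | IsPrimeFilter Q ∧ Q ⊆ P} with h𝒮
  have hzorn : ∀ c ⊆ 𝒮, IsChain (· ⊆ ·) c → c.Nonempty → ∃ lb ∈ 𝒮, ∀ s ∈ c, lb ⊆ s := by
    intro c hc hchain hcne
    obtain ⟨G0, hG0⟩ := hcne
    refine ⟨⋂₀ c, ⟨⟨⟨⊤, fun G hG => pf_top (hc hG).1⟩, ?_, ?_, ?_, ?_⟩,
      fun x hx => (hc hG0).2 (hx G0 hG0)⟩, fun s hs x hx => hx s hs⟩
    · intro h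
      have hb : (⊥ : L) ∈ ⋂₀ c := h ▸ Set.mem_univ ⊥
      exact pf_bot (hc hG0).1 (hb G0 hG0)
    · intro x y hx hxy G hG
      exact (hc hG).1.2.2.1 x y (hx G hG) hxy
    · intro x y hx hy G hG
      exact (hc hG).1.2.2.2.1 x y (hx G hG) (hy G hG)
    · intro x y hxy
      by_contra hcon
      push_neg at hcon
      obtain ⟨hx0, hy0⟩ := hcon
      rw [Set.mem_sInter] at hx0 hy0
      push_neg at hx0 hy0
      obtain ⟨G1, hG1, hx⟩ := hx0
      obtain ⟨G2, hG2, hy⟩ := hy0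
      rcases hchain.total hG1 hG2 with h | h
      · rcases (hc hG1).1.2.2.2.2 x y (hxy G1 hG1) with hh | hh
        exacts [hx hh, hy (h hh)]
      · rcases (hc hG2).1.2.2.2.2 x y (hxy G2 hG2) with hh | hh
        exacts [hx (h hh), hy hh]
  obtain ⟨m, hmP, hm⟩ := zorn_superset_nonempty 𝒮 hzorn P (show P ∈ 𝒮 from ⟨hP, le_rfl⟩)
  have hmS : IsPrimeFilter m ∧ m ⊆ P := hm.1
  exact ⟨m, And.intro (And.intro hmS.1 (fun R hR hRm =>
    subset_antisymm hRm (hm.2 (show R ∈ 𝒮 from ⟨hR, le_trans hRm hmP⟩) hRm))) hmP⟩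

lemma maximal_mem_or_pc_mem {Q : Set L} (hQ : IsMaximalPF Q) (a : L) :
    a ∈ Q ∨ pc a ∈ Q := by
  classical
  by_contra hcon
  push_neg at hcon
  obtain ⟨ha, hpc⟩ := hcon
  obtain ⟨P, hP, hQP, haP⟩ := exists_pf_extend hQ.1 hpc
  have : P = Q := hQ.2 P hP hQP
  exact ha (this ▸ haP)

lemma pc_mem_iff {P : Set L} (hP : IsPrimeFilter P) (a : L) :
    pc a ∈ P ↔ ∀ M : Set L, IsMaximalPF M → P ⊆ M → a ∉ M := by
  classical
  constructor
  · intro h M hM hPM haM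
    have hb : (⊥ : L) ∈ M := by
      rw [← inf_pc a]
      exact hM.1.2.2.2.1 a (pc a) haM (hPM h)
    exact pf_bot hM.1 hb
  · intro h
    by_contra hpc
    obtain ⟨P', hP', hPP', haP'⟩ := exists_pf_extend hP hpc
    obtain ⟨M, hM, hP'M⟩ := exists_maximal_above hP'
    exact h M hM (le_trans hPP' hP'M) (hP'M haP')

-- saturation transfer
lemma sat_phi {θ : L → L → Prop} (hdm : ∀ a b : L, θ a b → θ (dm a) (dm b))
    {P : Set L} (hsat : Sat θ P) : Sat θ (phi P) := by
  intro x y hxy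
  have := hsat (dm x) (dm y) (hdm x y hxy)
  simp only [phi, Set.mem_setOf_eq]
  exact not_congr this

lemma sat_maximal_above {θ : L → L → Prop} (hθ : IsCongruence θ)
    {P Q : Set L} (hP : IsPrimeFilter P) (hsat : Sat θ P)
    (hQ : IsMaximalPF Q) (hPQ : P ⊆ Q) : Sat θ Q := by
  classical
  have aux : ∀ x y : L, θ x y → x ∈ Q → y ∈ Q := by
    intro x y hxy hx
    by_contra hy
    have hx1 : x ⊔ y ∈ Q := hQ.1.2.2.1 x (x ⊔ y) hx le_sup_left
    have hθ1 : θ (x ⊔ y) y := by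
      have := hθ.2.2.1 x y y y hxy (hθ.1.refl y)
      rwa [sup_idem] at this
    have hpcy : pc y ∈ Q := (maximal_mem_or_pc_mem hQ y).resolve_left hy
    have hz : (x ⊔ y) ⊓ pc y ∈ Q := hQ.1.2.2.2.1 _ _ hx1 hpcy
    have hθ2 : θ ((x ⊔ y) ⊓ pc y) ⊥ := by
      have := hθ.2.1 (x ⊔ y) y (pc y) (pc y) hθ1 (hθ.1.refl (pc y))
      rwa [inf_pc y] at this
    have hθ3 : θ (pc ((x ⊔ y) ⊓ pc y)) ⊤ := by
      have := hθ.2.2.2.2 _ _ hθ2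
      rwa [pc_bot] at this
    have hpz : pc ((x ⊔ y) ⊓ pc y) ∈ P := (hsat _ _ hθ3).mpr (pf_top hP)
    have hb : (⊥ : L) ∈ Q := by
      rw [← inf_pc ((x ⊔ y) ⊓ pc y)]
      exact hQ.1.2.2.2.1 _ _ hz (hPQ hpz)
    exact pf_bot hQ.1 hb
  exact fun x y hxy => ⟨fun hx => aux x y hxy hx, fun hy => aux y x (hθ.1.symm hxy) hy⟩

lemma sat_minimal_below {θ : L → L → Prop} (hθ : IsCongruence θ)
    {P Q : Set L} (hP : IsPrimeFilter P) (hsat : Sat θ P)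
    (hQ : IsMinimalPF Q) (hQP : Q ⊆ P) : Sat θ Q := by
  have h1 : Sat θ (phi P) := sat_phi hθ.2.2.2.1 hsat
  have h2 : Sat θ (phi Q) := sat_maximal_above hθ (isPrimeFilter_phi hP) h1
    (maximal_phi_of_minimal hQ) (phi_anti hQP)
  have h3 := sat_phi hθ.2.2.2.1 h2
  rwa [phi_phi] at h3

-- congruence helpers
lemma theta_total_of_bot_top {θ : L → L → Prop} (hθ : IsCongruence θ) (h : θ ⊥ ⊤) :
    ∀ a b : L, θ a b := by
  have h1 : ∀ a : L, θ a ⊤ := by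
    intro a
    have := hθ.2.2.1 a a ⊥ ⊤ (hθ.1.refl a) h
    rwa [sup_bot_eq, sup_top_eq] at this
  exact fun a b => hθ.1.trans (h1 a) (hθ.1.symm (h1 b))

lemma theta_inf_sup {θ : L → L → Prop} (hθ : IsCongruence θ) {a b : L} (h : θ a b) :
    θ (a ⊓ b) (a ⊔ b) := by
  have h1 : θ (a ⊓ b) b := by
    have := hθ.2.1 a b b b h (hθ.1.refl b)
    rwa [inf_idem] at this
  have h2 : θ (a ⊔ b) b := by
    have := hθ.2.2.1 a b b b h (hθ.1.refl b)
    rwa [sup_idem] at this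
  exact hθ.1.trans h1 (hθ.1.symm h2)

lemma theta_of_inf_sup {θ : L → L → Prop} (hθ : IsCongruence θ) {a b : L}
    (h : θ (a ⊓ b) (a ⊔ b)) : θ a b := by
  have ha : θ a (a ⊔ b) := by
    have := hθ.2.2.1 a a (a ⊓ b) (a ⊔ b) (hθ.1.refl a) h
    rwa [sup_inf_self, ← sup_assoc, sup_idem] at this
  have hb : θ b (a ⊔ b) := by
    have := hθ.2.2.1 b b (a ⊓ b) (a ⊔ b) (hθ.1.refl b) h
    rwa [inf_comm a b, sup_inf_self, sup_comm b (a ⊔ b), sup_assoc, sup_idem] at this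
  exact hθ.1.trans ha (hθ.1.symm hb)

lemma exists_ne_of_ne_eq {θ : L → L → Prop} (hθ : IsCongruence θ)
    (h : θ ≠ fun a b : L => a = b) : ∃ a b : L, θ a b ∧ a ≠ b := by
  classical
  by_contra hcon
  push_neg at hcon
  apply h
  funext a b
  apply propext
  exact ⟨fun hab => hcon a b hab, fun hab => hab ▸ hθ.1.refl a⟩

lemma theta_eq_of_all_sat {θ : L → L → Prop} (hθ : IsCongruence θ)
    (hall : ∀ P : Set L, IsPrimeFilter P → Sat θ P) : θ = fun a b : L => a = b := by
  classical
  funext a b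
  apply propext
  refine ⟨fun hab => ?_, fun hab => hab ▸ hθ.1.refl a⟩
  by_contra hne
  have huv : θ (a ⊓ b) (a ⊔ b) := theta_inf_sup hθ hab
  have hle : ¬ (a ⊔ b ≤ a ⊓ b) := by
    intro h
    exact hne (le_antisymm (le_trans (le_trans le_sup_left h) inf_le_right)
      (le_trans (le_trans le_sup_right h) inf_le_left))
  obtain ⟨P, hP, hv, hu⟩ := exists_pf_between hle
  exact hu ((hall P hP (a ⊓ b) (a ⊔ b) huv).mpr hv)

lemma exists_sat_pf {θ : L → L → Prop} (hθ : IsCongruence θ) {u v : L}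
    (huv : u ≤ v) (h : ¬ θ u v) :
    ∃ P : Set L, IsPrimeFilter P ∧ Sat θ P ∧ v ∈ P ∧ u ∉ P := by
  classical
  obtain ⟨P, hP, hsat, hF, hI⟩ := sep_sat (θ := θ)
    hθ.1.refl (fun a b => hθ.1.symm) (fun a b c => hθ.1.trans)
    hθ.2.1 hθ.2.2.1
    (F := {y : L | ∃ x : L, v ≤ x ∧ θ x y}) (I := {y : L | ∃ x : L, x ≤ u ∧ θ x y})
    ⟨v, v, le_rfl, hθ.1.refl v⟩
    (fun y y' hy hyy' => by
      obtain ⟨x, hvx, hxy⟩ := hy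
      refine ⟨x ⊔ y', le_trans hvx le_sup_left, ?_⟩
      have := hθ.2.2.1 x y y' y' hxy (hθ.1.refl y')
      rwa [sup_eq_right.mpr hyy'] at this)
    (fun y y' hy hy' => by
      obtain ⟨x, hvx, hxy⟩ := hy
      obtain ⟨x', hvx', hxy'⟩ := hy'
      exact ⟨x ⊓ x', le_inf hvx hvx', hθ.2.1 _ _ _ _ hxy hxy'⟩)
    (fun y y' hyy' => ⟨fun ⟨x, hvx, hxy⟩ => ⟨x, hvx, hθ.1.trans hxy hyy'⟩,
      fun ⟨x, hvx, hxy⟩ => ⟨x, hvx, hθ.1.trans hxy (hθ.1.symm hyy')⟩⟩)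
    ⟨u, u, le_rfl, hθ.1.refl u⟩
    (fun y' y hy'y hy => by
      obtain ⟨x, hxu, hxy⟩ := hy
      refine ⟨x ⊓ y', le_trans inf_le_left hxu, ?_⟩
      have := hθ.2.1 x y y' y' hxy (hθ.1.refl y')
      rwa [inf_eq_right.mpr hy'y] at this)
    (fun y y' hy hy' => by
      obtain ⟨x, hxu, hxy⟩ := hy
      obtain ⟨x', hxu', hxy'⟩ := hy'
      exact ⟨x ⊔ x', sup_le hxu hxu', hθ.2.2.1 _ _ _ _ hxy hxy'⟩)
    (fun y y' hyy' => ⟨fun ⟨x, hxu, hxy⟩ => ⟨x, hxu, hθ.1.trans hxy hyy'⟩,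
      fun ⟨x, hxu, hxy⟩ => ⟨x, hxu, hθ.1.trans hxy (hθ.1.symm hyy')⟩⟩)
    (fun y hyF hyI => by
      obtain ⟨x, hvx, hxy⟩ := hyF
      obtain ⟨x', hxu, hxy'⟩ := hyI
      have hxx' : θ x x' := hθ.1.trans hxy (hθ.1.symm hxy')
      have h1 : θ v (x' ⊓ v) := by
        have := hθ.2.1 x x' v v hxx' (hθ.1.refl v)
        rwa [inf_eq_right.mpr hvx] at this
      have h2 : θ v u := by
        have := hθ.2.2.1 v (x' ⊓ v) u u h1 (hθ.1.refl u)
        rwa [sup_eq_left.mpr huv, sup_eq_right.mpr (le_trans inf_le_left hxu)] at this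
      exact h (hθ.1.symm h2))
  exact ⟨P, hP, hsat, hF ⟨v, le_rfl, hθ.1.refl v⟩, fun hu => hI u hu ⟨u, le_rfl, hθ.1.refl u⟩⟩

/-- The candidate monolith: agreement on all maximal and minimal prime filters. -/
def mu0 (L : Type*) [PMAlgebra L] : L → L → Prop :=
  fun a b => ∀ P : Set L, IsPrimeFilter P → (IsMaximalPF P ∨ IsMinimalPF P) → (a ∈ P ↔ b ∈ P)

lemma mu0_congruence : IsCongruence (mu0 L) := by
  classical
  have hdm : ∀ a b : L, mu0 L a b → mu0 L (dm a) (dm b) := by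
    intro a b h P hP hm
    have hphi := h (phi P) (isPrimeFilter_phi hP)
      (hm.elim (fun h' => Or.inr (minimal_phi_of_maximal h'))
               (fun h' => Or.inl (maximal_phi_of_minimal h')))
    constructor
    · intro hda
      by_contra hdb
      exact (hphi.mpr hdb) hda
    · intro hdb
      by_contra hda
      exact (hphi.mp hda) hdb
  refine ⟨⟨fun a P hP hm => Iff.rfl, ?_, ?_⟩, ?_, ?_, hdm, ?_⟩
  · exact fun h P hP hm => (h P hP hm).symm
  · exact fun h1 h2 P hP hm => (h1 P hP hm).trans (h2 P hP hm)
  · intro a b c d h1 h2 P hP hm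
    rw [pf_inf_iff hP, pf_inf_iff hP, h1 P hP hm, h2 P hP hm]
  · intro a b c d h1 h2 P hP hm
    rw [pf_sup_iff hP, pf_sup_iff hP, h1 P hP hm, h2 P hP hm]
  · intro a b h P hP hm
    rw [pc_mem_iff hP a, pc_mem_iff hP b]
    constructor
    · intro H M hM hPM hbM
      exact H M hM hPM ((h M hM.1 (Or.inl hM)).mpr hbM)
    · intro H M hM hPM haM
      exact H M hM hPM ((h M hM.1 (Or.inl hM)).mp haM)

lemma body_phi_mem {P : Set L} (h : P ∈ body L) : phi P ∈ body L := by
  refine ⟨isPrimeFilter_phi h.1, fun hmax => h.2.2 ?_, fun hmin => h.2.1 ?_⟩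
  · have := minimal_phi_of_maximal hmax
    rwa [phi_phi] at this
  · have := maximal_phi_of_minimal hmin
    rwa [phi_phi] at this

lemma not_max_witness {P : Set L} (hP : IsPrimeFilter P) (h : ¬ IsMaximalPF P) :
    ∃ c : L, c ∉ P ∧ pc c ∉ P := by
  classical
  rw [IsMaximalPF] at h
  push_neg at h
  obtain ⟨Q, hQ, hPQ, hQne⟩ := h hP
  have : ¬ Q ⊆ P := fun hsub => hQne (subset_antisymm hsub hPQ)
  rw [Set.not_subset] at this
  obtain ⟨c, hcQ, hcP⟩ := this
  refine ⟨c, hcP, fun hpc => ?_⟩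
  have hb : (⊥ : L) ∈ Q := by
    rw [← inf_pc c]
    exact hQ.2.2.2.1 c (pc c) hcQ (hPQ hpc)
  exact pf_bot hQ hb

lemma mu0_witness {P₀ : Set L} (hP₀ : P₀ ∈ body L) :
    ∃ u v : L, u ≠ v ∧ mu0 L u v := by
  classical
  -- a dense element outside P₀
  obtain ⟨c, hcP, hpcP⟩ := not_max_witness hP₀.1 hP₀.2.1
  set w : L := c ⊔ pc c with hw
  have hwP₀ : w ∉ P₀ := fun h => (hP₀.1.2.2.2.2 c (pc c) h).elim hcP hpcP
  have hwdense : pc w = ⊥ := by rw [hw, pc_sup, inf_pc]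
  -- a codense element inside P₀
  have hphibody : phi P₀ ∈ body L := body_phi_mem hP₀
  obtain ⟨z, hzP, hpzP⟩ := not_max_witness hphibody.1 hphibody.2.1
  set s : L := z ⊔ pc z with hs
  have hsphi : s ∉ phi P₀ := fun h => ((isPrimeFilter_phi hP₀.1).2.2.2.2 z (pc z) h).elim hzP hpzP
  have hsdense : pc s = ⊥ := by rw [hs, pc_sup, inf_pc]
  set e : L := dm s with he
  have heP₀ : e ∈ P₀ := by
    by_contra h
    exact hsphi h
  refine ⟨e ⊓ w, e, fun h => ?_, ?_⟩
  · exact hwP₀ (hP₀.1.2.2.1 e w heP₀ (inf_eq_left.mp h))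
  · intro P hP hm
    constructor
    · intro h'
      exact hP.2.2.1 _ _ h' inf_le_left
    · intro heP
      rcases hm with hmax | hmin
      · have hwP : w ∈ P := by
          rcases maximal_mem_or_pc_mem hmax w with h' | h'
          · exact h'
          · rw [hwdense] at h'
            exact absurd h' (pf_bot hP)
        exact hP.2.2.2.1 e w heP hwP
      · exfalso
        have hsphiP : s ∈ phi P := by
          rcases maximal_mem_or_pc_mem (maximal_phi_of_minimal hmin) s with h' | h'
          · exact h'
          · rw [hsdense] at h'
            exact absurd h' (pf_bot (isPrimeFilter_phi hP))
        exact hsphiP (show dm s ∈ P from heP)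

/-- If some body prime is saturated (or there are none) and some prime is
saturated, then all primes are saturated, by φ-connectedness. -/
lemma all_sat_of_conn {θ : L → L → Prop} (hθ : IsCongruence θ) (hconn : PhiConnected L)
    (hbodysat : ∀ R : Set L, R ∈ body L → Sat θ R)
    (hexist : ∃ P : Set L, IsPrimeFilter P ∧ Sat θ P) :
    ∀ P : Set L, IsPrimeFilter P → Sat θ P := by
  classical
  set S : Set (Set L) := {P | IsPrimeFilter P ∧ Sat θ P} with hS
  have hSall : S = {P : Set L | IsPrimeFilter P} := by
    apply hconn S (fun P hP => hP.1) hexist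
    · -- increasing
      intro P Q hPS hQ hPQ
      by_cases hQmax : IsMaximalPF Q
      · exact ⟨hQ, sat_maximal_above hθ hPS.1 hPS.2 hQmax hPQ⟩
      by_cases hQmin : IsMinimalPF Q
      · have : P = Q := hQmin.2 P hPS.1 hPQ
        exact this ▸ hPS
      · exact ⟨hQ, hbodysat Q ⟨hQ, hQmax, hQmin⟩⟩
    · -- decreasing
      intro P Q hPS hQ hQP
      by_cases hQmin : IsMinimalPF Q
      · exact ⟨hQ, sat_minimal_below hθ hPS.1 hPS.2 hQmin hQP⟩
      by_cases hQmax : IsMaximalPF Q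
      · have : P = Q := hQmax.2 P hPS.1 hQP
        exact this ▸ hPS
      · exact ⟨hQ, hbodysat Q ⟨hQ, hQmax, hQmin⟩⟩
    · -- involutive
      intro P hPS
      exact ⟨isPrimeFilter_phi hPS.1, sat_phi hθ.2.2.2.1 hPS.2⟩
  intro P hP
  have : P ∈ S := hSall ▸ (show P ∈ {P : Set L | IsPrimeFilter P} from hP)
  exact this.2

end PMAlgebra

open PMAlgebra


/-- A nontrivial φ-connected pm-algebra whose body has fewer than two elements,
or is of the form `{P, φ(P)}` with `φ(P) ≠ P`, is subdirectly irreducible. -/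
theorem subdirectlyIrreducible_of_body {L : Type*} [PMAlgebra L]
    (hnt : (⊥ : L) ≠ ⊤) (hconn : PhiConnected L)
    (hbody : (body L).encard < 2 ∨
      ∃ P : Set L, IsPrimeFilter P ∧ phi P ≠ P ∧ body L = {P, phi P}) :
    SubdirectlyIrreducible L := by
  classical
  rcases Set.eq_empty_or_nonempty (body L) with hbe | ⟨P₀, hP₀⟩
  · -- body empty: L is simple, take the total relation
    refine ⟨fun _ _ => True, ?_, ?_, ?_⟩
    · exact ⟨⟨fun _ => trivial, fun _ => trivial, fun _ _ => trivial⟩,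
        fun _ _ _ _ _ _ => trivial, fun _ _ _ _ _ _ => trivial,
        fun _ _ _ => trivial, fun _ _ _ => trivial⟩
    · intro h
      have h2 := congrFun (congrFun h (⊥ : L)) (⊤ : L)
      exact hnt (cast h2 trivial)
    · intro θ hθ hθne a b _
      by_cases h01 : θ ⊥ ⊤
      · exact theta_total_of_bot_top hθ h01 a b
      · exfalso
        apply hθne
        apply theta_eq_of_all_sat hθ
        have hbodysat : ∀ R : Set L, R ∈ body L → Sat θ R :=
          fun R hR => absurd (hbe ▸ hR) (Set.notMem_empty R)
        obtain ⟨Q, hQ, hsat, _, _⟩ := exists_sat_pf hθ (bot_le : (⊥:L) ≤ ⊤) h01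
        exact all_sat_of_conn hθ hconn hbodysat ⟨Q, hQ, hsat⟩
  · -- body nonempty
    have hex : ∃ P₁ : Set L, P₁ ∈ body L ∧
        ∀ R : Set L, R ∈ body L → R = P₁ ∨ R = phi P₁ := by
      rcases hbody with hlt | ⟨P, _, _, heq⟩
      · refine ⟨P₀, hP₀, fun R hR => Or.inl ?_⟩
        by_contra hne
        have h1 : 1 < (body L).encard :=
          Set.one_lt_encard_iff.mpr ⟨R, P₀, hR, hP₀, hne⟩
        have h2 : (1 : ℕ∞) + 1 ≤ (body L).encard := Order.add_one_le_of_lt h1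
        rw [one_add_one_eq_two] at h2
        exact absurd hlt (not_lt.mpr h2)
      · refine ⟨P, ?_, fun R hR => ?_⟩
        · rw [heq]; exact Set.mem_insert _ _
        · rw [heq] at hR
          rcases hR with h | h
          exacts [Or.inl h, Or.inr h]
    obtain ⟨P₁, hP₁, hsub⟩ := hex
    obtain ⟨u, v, huv, hmu⟩ := mu0_witness hP₁
    refine ⟨mu0 L, mu0_congruence, ?_, ?_⟩
    · intro h
      have h2 := congrFun (congrFun h u) v
      exact huv (cast h2 hmu)
    · intro θ hθ hθne a b hab
      by_cases h01 : θ ⊥ ⊤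
      · exact theta_total_of_bot_top hθ h01 a b
      by_contra hnab
      have hnuv : ¬ θ (a ⊓ b) (a ⊔ b) := fun h => hnab (theta_of_inf_sup hθ h)
      obtain ⟨Psep, hPsep, hsat, hvP, huP⟩ := exists_sat_pf hθ inf_le_sup hnuv
      have hsep : ¬ (a ∈ Psep ↔ b ∈ Psep) := by
        intro hiff
        rcases (pf_sup_iff hPsep).mp hvP with ha | hb
        · exact huP ((pf_inf_iff hPsep).mpr ⟨ha, hiff.mp ha⟩)
        · exact huP ((pf_inf_iff hPsep).mpr ⟨hiff.mpr hb, hb⟩)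
      have hPbody : Psep ∈ body L :=
        ⟨hPsep, fun hmax => hsep (hab Psep hPsep (Or.inl hmax)),
          fun hmin => hsep (hab Psep hPsep (Or.inr hmin))⟩
      have hsatP₁ : Sat θ P₁ ∧ Sat θ (phi P₁) := by
        rcases hsub Psep hPbody with h | h
        · exact ⟨h ▸ hsat, sat_phi hθ.2.2.2.1 (h ▸ hsat)⟩
        · have h2 : Sat θ (phi P₁) := h ▸ hsat
          have h3 := sat_phi hθ.2.2.2.1 h2
          rw [phi_phi] at h3
          exact ⟨h3, h2⟩
      have hbodysat : ∀ R : Set L, R ∈ body L → Sat θ R := by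
        intro R hR
        rcases hsub R hR with h | h
        · exact h ▸ hsatP₁.1
        · exact h ▸ hsatP₁.2
      have hall := all_sat_of_conn hθ hconn hbodysat ⟨Psep, hPsep, hsat⟩
      exact hθne (theta_eq_of_all_sat hθ hall)
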